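/- arXiv:2105.15007 — 6 statements merged into one kernel-verified Lean document; each statement's English description precedes it below -/
import Mathlib

section
/- Let U be a finite set and S a family of subsets of U such that some subfamily Z ⊆ S covers U (i.e., ⋃_{z∈Z} z = U). Suppose we greedily pick sets c₁,…,c_Y ∈ S with Y = ⌈2|Z|·log(1/α)⌉ such that, letting U_i = U \ (c₁ ∪ ⋯ ∪ c_{i−1}), each pick satisfies |c_i ∩ U_i| ≥ (1/2)·max_{c∈S} |c ∩ U_i|. Then |c₁ ∪ ⋯ ∪ c_Y| ≥ (1−α)·|U|. -/
theorem greedy_max_coverage {γ : Type*} [DecidableEq γ]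
    (U : Finset γ) (S Z : Finset (Finset γ))
    (hZS : Z ⊆ S) (hcover : Z.biUnion id = U)
    (α : ℝ) (hα : α ∈ Set.Ioo (0:ℝ) 1)
    (Y : ℕ) (hY : Y = ⌈2 * (Z.card : ℝ) * Real.log (1 / α)⌉₊)
    (c : ℕ → Finset γ)
    (hmem : ∀ i < Y, c i ∈ S)
    (hgreedy : ∀ i < Y, ∀ s ∈ S,
      ((s ∩ (U \ (Finset.range i).biUnion c)).card : ℝ) / 2
        ≤ ((c i ∩ (U \ (Finset.range i).biUnion c)).card : ℝ)) :
    (1 - α) * (U.card : ℝ) ≤ (((Finset.range Y).biUnion c).card : ℝ) := by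
  obtain ⟨hα0, hα1⟩ := hα
  by_cases hZ : Z = ∅
  · subst hZ
    simp at hcover
    rw [← hcover]
    simp
  have hkpos : 0 < Z.card := Finset.card_pos.mpr (Finset.nonempty_iff_ne_empty.mpr hZ)
  have hk1 : (1:ℝ) ≤ (Z.card : ℝ) := by exact_mod_cast hkpos
  set k : ℝ := (Z.card : ℝ) with hkdef
  set r : ℝ := 1 - 1/(2*k) with hr
  have hkp : (0:ℝ) < k := by linarith
  have hr0 : 0 ≤ r := by
    have : 1/(2*k) ≤ 1/2 := by
      apply one_div_le_one_div_of_le <;> linarith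
    rw [hr]; linarith
  -- one step of the greedy decay
  have step : ∀ i < Y,
      (((U \ (Finset.range (i+1)).biUnion c).card : ℝ))
        ≤ ((U \ (Finset.range i).biUnion c).card : ℝ) * r := by
    intro i hi
    set Ui := U \ (Finset.range i).biUnion c with hUi
    have hsub : Ui ⊆ Z.biUnion (fun z => z ∩ Ui) := by
      intro x hx
      have hxU : x ∈ U := (Finset.mem_sdiff.mp hx).1
      rw [← hcover] at hxU
      obtain ⟨z, hz, hxz⟩ := Finset.mem_biUnion.mp hxU
      exact Finset.mem_biUnion.mpr ⟨z, hz, Finset.mem_inter.mpr ⟨hxz, hx⟩⟩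
    have hcard : Ui.card ≤ ∑ z ∈ Z, (z ∩ Ui).card :=
      (Finset.card_le_card hsub).trans Finset.card_biUnion_le
    have hex : ∃ z ∈ Z, Ui.card ≤ Z.card * (z ∩ Ui).card := by
      by_contra h
      push_neg at h
      have hlt : ∑ z ∈ Z, Z.card * (z ∩ Ui).card < ∑ _z ∈ Z, Ui.card :=
        Finset.sum_lt_sum_of_nonempty (Finset.nonempty_iff_ne_empty.mpr hZ)
          (fun z hz => h z hz)
      rw [← Finset.mul_sum, Finset.sum_const, smul_eq_mul] at hlt
      have := Nat.lt_of_mul_lt_mul_left hlt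
      omega
    obtain ⟨z, hzZ, hz⟩ := hex
    have hg := hgreedy i hi z (hZS hzZ)
    rw [← hUi] at hg
    -- split cardinality
    have hB : (Finset.range (i+1)).biUnion c = c i ∪ (Finset.range i).biUnion c := by
      rw [Finset.range_add_one, Finset.biUnion_insert]
    have hsd : U \ (Finset.range (i+1)).biUnion c = Ui \ c i := by
      rw [hB, hUi, Finset.sdiff_union_distrib, Finset.inter_comm]
      · ext x; simp [Finset.mem_sdiff, Finset.mem_inter]; tauto
    have hsplit : (Ui \ c i).card + (c i ∩ Ui).card = Ui.card := by
      rw [Finset.inter_comm]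
      exact Finset.card_sdiff_add_card_inter Ui (c i)
    rw [hsd]
    have hzr : ((Ui.card : ℝ)) ≤ k * ((z ∩ Ui).card : ℝ) := by
      rw [hkdef]; exact_mod_cast hz
    have hsplit' : ((Ui \ c i).card : ℝ) + ((c i ∩ Ui).card : ℝ) = (Ui.card : ℝ) := by
      exact_mod_cast hsplit
    rw [hr]
    have h2k : (0:ℝ) < 2*k := by linarith
    have key : (Ui.card : ℝ) ≤ 2*k*((c i ∩ Ui).card : ℝ) := by nlinarith [hg, hzr]
    have hdiv : (Ui.card : ℝ)/(2*k) ≤ ((c i ∩ Ui).card : ℝ) := by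
      rw [div_le_iff₀ h2k]; nlinarith [key]
    have heq : (Ui.card : ℝ) * (1 - 1/(2*k)) = (Ui.card : ℝ) - (Ui.card : ℝ)/(2*k) := by
      field_simp
    rw [heq]
    linarith [hsplit', hdiv]
  -- iterate
  have decay : ∀ i ≤ Y, ((U \ (Finset.range i).biUnion c).card : ℝ) ≤ (U.card : ℝ) * r ^ i := by
    intro i
    induction i with
    | zero => intro _; simp
    | succ n ih =>
      intro hn
      have hnY : n < Y := hn
      have h1 := step n hnY
      have h2 := ih (le_of_lt hnY)
      calc ((U \ (Finset.range (n+1)).biUnion c).card : ℝ)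
          ≤ ((U \ (Finset.range n).biUnion c).card : ℝ) * r := h1
        _ ≤ ((U.card : ℝ) * r ^ n) * r := by
            apply mul_le_mul_of_nonneg_right h2 hr0
        _ = (U.card : ℝ) * r ^ (n+1) := by ring
  -- bound r^Y ≤ α
  have hlogpos : 0 < Real.log (1/α) := by
    apply Real.log_pos
    rw [one_lt_div hα0]; exact hα1
  have hYge : 2 * k * Real.log (1/α) ≤ (Y : ℝ) := by
    rw [hY]; exact Nat.le_ceil _
  have hx : (0:ℝ) < 1/(2*k) := by positivity
  have hrexp : r ≤ Real.exp (-(1/(2*k))) := by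
    have := Real.add_one_le_exp (-(1/(2*k)))
    rw [hr]; linarith
  have hpow : r ^ Y ≤ α := by
    calc r ^ Y ≤ (Real.exp (-(1/(2*k)))) ^ Y :=
          pow_le_pow_left₀ hr0 hrexp Y
      _ = Real.exp (-(1/(2*k)) * Y) := by
          rw [← Real.exp_nat_mul]; ring_nf
      _ ≤ Real.exp (Real.log α) := by
          apply Real.exp_le_exp.mpr
          have hlog : Real.log (1/α) = - Real.log α := by
            rw [one_div, Real.log_inv]
          rw [hlog] at hYge
          have h2k : (0:ℝ) < 2*k := by linarith
          rw [neg_mul, neg_le]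
          rw [div_mul_eq_mul_div, le_div_iff₀ h2k] at *
          nlinarith [hYge]
      _ = α := Real.exp_log hα0
  have hfinal := decay Y le_rfl
  have hle : (U.card : ℝ) * r ^ Y ≤ α * (U.card : ℝ) := by
    have hU0 : (0:ℝ) ≤ (U.card : ℝ) := by positivity
    nlinarith [hpow, hU0]
  -- card arithmetic
  have hsplit : (U \ (Finset.range Y).biUnion c).card
      + (U ∩ (Finset.range Y).biUnion c).card = U.card :=
    Finset.card_sdiff_add_card_inter U _
  have hle2 : (U ∩ (Finset.range Y).biUnion c).card ≤ ((Finset.range Y).biUnion c).card :=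
    Finset.card_le_card (Finset.inter_subset_right)
  have hsplit' : ((U \ (Finset.range Y).biUnion c).card : ℝ)
      + ((U ∩ (Finset.range Y).biUnion c).card : ℝ) = (U.card : ℝ) := by
    exact_mod_cast hsplit
  have hle2' : ((U ∩ (Finset.range Y).biUnion c).card : ℝ)
      ≤ (((Finset.range Y).biUnion c).card : ℝ) := by exact_mod_cast hle2
  linarith
end

section
/- Let S be a finite set of points in ℝ^d and let C_R be a d-dimensional rectangular grid of cells with side length R shifted by a uniformly random offset in [0,R]^d. Then with probability at least 1−β, the number of cells C of the grid whose squared Euclidean distance to S is at most R²/d² is O(|S|/β). -/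
open MeasureTheory
open scoped ENNReal

noncomputable section RandomShiftAux

/-- Per-coordinate finset of admissible integer indices. -/
def Fset (R xx c t : ℝ) : Finset ℤ :=
  Finset.Ioc ⌊(c - xx - t)/R - 1⌋ ⌊(c + xx - t)/R⌋

lemma mem_Fset {R xx c t : ℝ} (hR : 0 < R) {j : ℤ} :
    j ∈ Fset R xx c t ↔ c - xx < t + R * (j + 1) ∧ t + R * j ≤ c + xx := by
  simp only [Fset, Finset.mem_Ioc, Int.floor_lt, Int.le_floor]
  constructor
  · rintro ⟨h1, h2⟩
    rw [sub_lt_iff_lt_add, div_lt_iff₀ hR] at h1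
    rw [le_div_iff₀ hR] at h2
    constructor <;> nlinarith
  · rintro ⟨h1, h2⟩
    rw [sub_lt_iff_lt_add, div_lt_iff₀ hR]
    rw [le_div_iff₀ hR]
    constructor <;> nlinarith

lemma mem_Ioc_iff_mem_Fset {R xx c t : ℝ} (hR : 0 < R) {j : ℤ} :
    t ∈ Set.Ioc (c - xx - R * (j + 1)) (c + xx - R * j) ↔ j ∈ Fset R xx c t := by
  rw [mem_Fset hR, Set.mem_Ioc]
  constructor <;> rintro ⟨h1, h2⟩ <;> constructor <;> linarith

/-- The per-coordinate counting function, written as a sum of indicators. -/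
def Nfun (R xx c : ℝ) (t : ℝ) : ℝ≥0∞ :=
  ∑' j : ℤ, (Set.Ioc (c - xx - R * (j + 1)) (c + xx - R * j)).indicator 1 t

lemma Nfun_eq {R xx c : ℝ} (hR : 0 < R) (t : ℝ) :
    Nfun R xx c t = ((Fset R xx c t).card : ℝ≥0∞) := by
  rw [Nfun]
  have h : ∀ j : ℤ, (Set.Ioc (c - xx - R * (j + 1)) (c + xx - R * j)).indicator
      (1 : ℝ → ℝ≥0∞) t = if j ∈ Fset R xx c t then 1 else 0 := by
    intro j
    by_cases hj : j ∈ Fset R xx c t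
    · rw [Set.indicator_of_mem ((mem_Ioc_iff_mem_Fset hR).mpr hj), if_pos hj, Pi.one_apply]
    · rw [Set.indicator_of_notMem, if_neg hj]
      exact fun hm => hj ((mem_Ioc_iff_mem_Fset hR).mp hm)
  rw [tsum_congr h, tsum_eq_sum (s := Fset R xx c t) (fun j hj => if_neg hj)]
  simp

lemma measurable_Nfun (R xx c : ℝ) : Measurable (Nfun R xx c) :=
  Measurable.ennreal_tsum fun _ => measurable_const.indicator measurableSet_Ioc

lemma iUnion_Ioc_scaled {R : ℝ} (hR : 0 < R) :
    (⋃ j : ℤ, Set.Ioc (R * j) (R * (j + 1))) = Set.univ := by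
  ext t
  simp only [Set.mem_iUnion, Set.mem_Ioc, Set.mem_univ, iff_true]
  refine ⟨⌈t / R⌉ - 1, ?_, ?_⟩
  · have h := Int.ceil_lt_add_one (t / R)
    have : ((⌈t / R⌉ - 1 : ℤ) : ℝ) < t / R := by push_cast; linarith
    calc R * ((⌈t / R⌉ - 1 : ℤ) : ℝ) < R * (t / R) := by
          exact (mul_lt_mul_iff_right₀ hR).mpr this
      _ = t := by field_simp
  · have h := Int.le_ceil (t / R)
    have : t / R ≤ ((⌈t / R⌉ - 1 : ℤ) : ℝ) + 1 := by push_cast; linarith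
    calc t = R * (t / R) := by field_simp
      _ ≤ R * (((⌈t / R⌉ - 1 : ℤ) : ℝ) + 1) := by
          exact (mul_le_mul_iff_right₀ hR).mpr this

lemma lintegral_Nfun {R xx c : ℝ} (hR : 0 < R) (hx : 0 ≤ xx) :
    ∫⁻ t in Set.Icc (0:ℝ) R, Nfun R xx c t ≤ ENNReal.ofReal (2 * xx + R) := by
  set p := c - xx - R with hp
  set q := c + xx with hq
  have hiq : ∀ j : ℤ, Set.Ioc (c - xx - R * ((j:ℝ) + 1)) (c + xx - R * j)
      = Set.Ioc (p - R * j) (q - R * j) := by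
    intro j; rw [hp, hq]; congr 1 <;> ring
  have hdisj : Pairwise (Function.onFun Disjoint
      fun j : ℤ => Set.Ioc (R * (j:ℝ)) (R * ((j:ℝ) + 1)) ∩ Set.Ioc p q) := by
    intro i j hij
    refine Set.disjoint_of_subset Set.inter_subset_left Set.inter_subset_left ?_
    rw [Set.Ioc_disjoint_Ioc]
    rcases hij.lt_or_gt with h | h
    · have hc : (i:ℝ) + 1 ≤ (j:ℝ) := by exact_mod_cast h
      calc min (R*((i:ℝ)+1)) (R*((j:ℝ)+1)) ≤ R*((i:ℝ)+1) := min_le_left _ _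
        _ ≤ R*(j:ℝ) := by nlinarith
        _ ≤ max (R*(i:ℝ)) (R*(j:ℝ)) := le_max_right _ _
    · have hc : (j:ℝ) + 1 ≤ (i:ℝ) := by exact_mod_cast h
      calc min (R*((i:ℝ)+1)) (R*((j:ℝ)+1)) ≤ R*((j:ℝ)+1) := min_le_right _ _
        _ ≤ R*(i:ℝ) := by nlinarith
        _ ≤ max (R*(i:ℝ)) (R*(j:ℝ)) := le_max_left _ _
  have key : ∀ j : ℤ, (volume.restrict (Set.Icc (0:ℝ) R))
      (Set.Ioc (p - R * (j:ℝ)) (q - R * (j:ℝ)))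
      ≤ volume (Set.Ioc (R * (j:ℝ)) (R * ((j:ℝ) + 1)) ∩ Set.Ioc p q) := by
    intro j
    rw [Measure.restrict_apply measurableSet_Ioc]
    have hsub : Set.Ioc (p - R * (j:ℝ)) (q - R * (j:ℝ)) ∩ Set.Icc (0:ℝ) R
        ⊆ (Set.Ioc (p - R * (j:ℝ)) (q - R * (j:ℝ)) ∩ Set.Ioc (0:ℝ) R) ∪ {0} := by
      rintro t ⟨ht1, ht2⟩
      rcases eq_or_lt_of_le ht2.1 with h0 | h0
      · exact Or.inr (by simp [← h0])
      · exact Or.inl ⟨ht1, h0, ht2.2⟩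
    calc volume (Set.Ioc (p - R * (j:ℝ)) (q - R * (j:ℝ)) ∩ Set.Icc (0:ℝ) R)
        ≤ volume (Set.Ioc (p - R * (j:ℝ)) (q - R * (j:ℝ)) ∩ Set.Ioc (0:ℝ) R)
          + volume ({0} : Set ℝ) := (measure_mono hsub).trans (measure_union_le _ _)
      _ = volume (Set.Ioc (p - R * (j:ℝ)) (q - R * (j:ℝ)) ∩ Set.Ioc (0:ℝ) R) := by
          rw [Real.volume_singleton, add_zero]
      _ = volume (Set.Ioc (R * (j:ℝ)) (R * ((j:ℝ) + 1)) ∩ Set.Ioc p q) := by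
          rw [Set.Ioc_inter_Ioc, Set.Ioc_inter_Ioc, Real.volume_Ioc, Real.volume_Ioc]
          congr 1
          simp only [min_def, max_def]
          split_ifs <;> linarith
  calc ∫⁻ t in Set.Icc (0:ℝ) R, Nfun R xx c t
      = ∑' j : ℤ, (volume.restrict (Set.Icc (0:ℝ) R))
          (Set.Ioc (p - R * (j:ℝ)) (q - R * (j:ℝ))) := by
        simp only [Nfun, hiq]
        exact (lintegral_tsum fun j =>
          (measurable_const.indicator measurableSet_Ioc).aemeasurable).trans
          (tsum_congr fun j => lintegral_indicator_one measurableSet_Ioc)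
    _ ≤ ∑' j : ℤ, volume (Set.Ioc (R * (j:ℝ)) (R * ((j:ℝ) + 1)) ∩ Set.Ioc p q) :=
        ENNReal.tsum_le_tsum key
    _ = volume (⋃ j : ℤ, Set.Ioc (R * (j:ℝ)) (R * ((j:ℝ) + 1)) ∩ Set.Ioc p q) :=
        (measure_iUnion hdisj fun j => measurableSet_Ioc.inter measurableSet_Ioc).symm
    _ = volume (Set.Ioc p q) := by
        rw [← Set.iUnion_inter, iUnion_Ioc_scaled hR, Set.univ_inter]
    _ = ENNReal.ofReal (q - p) := Real.volume_Ioc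
    _ ≤ ENNReal.ofReal (2 * xx + R) := by
        apply ENNReal.ofReal_le_ofReal; rw [hp, hq]; linarith

lemma lintegral_pi_prod : ∀ {n : ℕ} (f : Fin n → ℝ → ℝ≥0∞), (∀ i, Measurable (f i)) →
    ∫⁻ x : Fin n → ℝ, ∏ i, f i (x i) = ∏ i, ∫⁻ t, f i t := by
  intro n
  induction n with
  | zero =>
      intro f _
      simp only [Finset.univ_eq_empty, Finset.prod_empty, lintegral_const, one_mul]
      rw [volume_pi, Measure.pi_univ]
      simp
  | succ n ih =>
      intro f hf
      have hg : Measurable fun x : Fin (n+1) → ℝ => ∏ i, f i (x i) :=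
        Finset.measurable_prod _ fun i _ => (hf i).comp (measurable_pi_apply i)
      have hmp := (volume_preserving_piFinSuccAbove (fun _ : Fin (n+1) => ℝ) 0).symm
      calc ∫⁻ x : Fin (n+1) → ℝ, ∏ i, f i (x i)
          = ∫⁻ y : ℝ × (Fin n → ℝ), ∏ i, f i
              ((MeasurableEquiv.piFinSuccAbove (fun _ : Fin (n+1) => ℝ) 0).symm y i) := by
            rw [← hmp.lintegral_comp hg]
        _ = ∫⁻ y : ℝ × (Fin n → ℝ), f 0 y.1 * ∏ i : Fin n, f (Fin.succ i) (y.2 i) := by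
            refine lintegral_congr fun y => ?_
            simp_rw [MeasurableEquiv.piFinSuccAbove_symm_apply, Fin.insertNthEquiv,
              Equiv.coe_fn_mk, Fin.insertNth_zero]
            rw [Fin.prod_univ_succ]
            simp [Fin.cons_succ]
        _ = (∫⁻ t, f 0 t) * ∫⁻ y : Fin n → ℝ, ∏ i : Fin n, f (Fin.succ i) (y i) := by
            rw [Measure.volume_eq_prod]
            exact lintegral_prod_mul (hf 0).aemeasurable
              (Finset.measurable_prod _ fun i _ =>
                (hf _).comp (measurable_pi_apply i)).aemeasurable
        _ = ∏ i, ∫⁻ t, f i t := by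
            rw [ih (fun i => f (Fin.succ i)) (fun i => hf _), Fin.prod_univ_succ]

end RandomShiftAux

/-- The cell of the shifted grid with side length `R`, shift `γ`, indexed by `j : Fin d → ℤ`. -/
def gridCell (d : ℕ) (R : ℝ) (γ : Fin d → ℝ) (j : Fin d → ℤ) : Set (Fin d → ℝ) :=
  {x | ∀ i, γ i + R * j i ≤ x i ∧ x i < γ i + R * (j i + 1)}

/-- The number of cells of the shifted grid whose squared Euclidean distance to `S`
is at most `R²/d²`. -/
noncomputable def closeCellCount (d : ℕ) (R : ℝ) (S : Finset (Fin d → ℝ))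
    (γ : Fin d → ℝ) : ℕ :=
  {j : Fin d → ℤ | ∃ s ∈ S, ∃ x ∈ gridCell d R γ j,
    ∑ i, (s i - x i)^2 ≤ R^2 / (d : ℝ)^2}.ncard

open scoped ENNReal in
lemma closeCellCount_le {d : ℕ} {R : ℝ} {S : Finset (Fin d → ℝ)} {γ : Fin d → ℝ}
    (hd : 0 < d) (hR : 0 < R) :
    (closeCellCount d R S γ : ℝ≥0∞)
      ≤ ∑ s ∈ S, ∏ i, ((Fset R (R / d) (s i) (γ i)).card : ℝ≥0∞) := by
  classical
  have hdR : (0:ℝ) < (d:ℝ) := by exact_mod_cast hd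
  have hxnn : (0:ℝ) ≤ R / d := le_of_lt (div_pos hR hdR)
  set U : Finset (Fin d → ℤ) :=
    S.biUnion (fun s => Fintype.piFinset fun i => Fset R (R / d) (s i) (γ i)) with hU
  have hsub : {j : Fin d → ℤ | ∃ s ∈ S, ∃ x ∈ gridCell d R γ j,
      ∑ i, (s i - x i)^2 ≤ R^2 / (d : ℝ)^2} ⊆ ↑U := by
    rintro j ⟨s, hs, x, hx, hsum⟩
    rw [Finset.coe_biUnion]
    refine Set.mem_biUnion hs ?_
    rw [Finset.mem_coe, Fintype.mem_piFinset]
    intro i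
    have hsq : (s i - x i)^2 ≤ (R / d)^2 := by
      rw [div_pow]
      refine le_trans ?_ hsum
      exact Finset.single_le_sum (f := fun k => (s k - x k)^2)
        (fun k _ => sq_nonneg _) (Finset.mem_univ i)
    have habs : |s i - x i| ≤ R / d := abs_le_of_sq_le_sq hsq hxnn
    rw [abs_le] at habs
    have hc := hx i
    rw [mem_Fset hR]
    constructor
    · calc s i - R / d ≤ x i := by linarith [habs.2]
        _ < γ i + R * ((j i : ℝ) + 1) := by exact_mod_cast hc.2
    · calc γ i + R * (j i : ℝ) ≤ x i := by exact_mod_cast hc.1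
        _ ≤ s i + R / d := by linarith [habs.1]
  have h1 : closeCellCount d R S γ ≤ U.card := by
    rw [closeCellCount, ← Set.ncard_coe_finset U]
    exact Set.ncard_le_ncard hsub U.finite_toSet
  have h2 : U.card ≤ ∑ s ∈ S, ∏ i, (Fset R (R / d) (s i) (γ i)).card := by
    refine (Finset.card_biUnion_le).trans ?_
    refine Finset.sum_le_sum fun s _ => ?_
    rw [Fintype.card_piFinset]
  calc (closeCellCount d R S γ : ℝ≥0∞)
      ≤ ((∑ s ∈ S, ∏ i, (Fset R (R / d) (s i) (γ i)).card : ℕ) : ℝ≥0∞) := by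
        exact_mod_cast Nat.cast_le.mpr (h1.trans h2)
    _ = ∑ s ∈ S, ∏ i, ((Fset R (R / d) (s i) (γ i)).card : ℝ≥0∞) := by push_cast; rfl

lemma pow_bound_nine {d : ℕ} (hd : 0 < d) {R : ℝ} (hR : 0 < R) :
    (2 * (R / d) + R)^d ≤ 9 * R^d := by
  have hdR : (0:ℝ) < d := by exact_mod_cast hd
  have h1 : 2 * (R / d) + R = (1 + 2 / d) * R := by field_simp; ring
  rw [h1, mul_pow]
  have hexp2 : Real.exp 2 ≤ 9 := by
    have h : Real.exp 2 = Real.exp 1 * Real.exp 1 := by rw [← Real.exp_add]; norm_num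
    nlinarith [Real.exp_one_lt_d9, Real.exp_pos 1]
  have h2 : (1 + 2 / (d:ℝ))^d ≤ 9 := by
    have ha : (0:ℝ) ≤ 1 + 2 / d := by positivity
    have hb : 1 + 2 / (d:ℝ) ≤ Real.exp (2 / d) := by
      have := Real.add_one_le_exp (2 / (d:ℝ)); linarith
    calc (1 + 2 / (d:ℝ))^d ≤ (Real.exp (2 / d))^d := pow_le_pow_left₀ ha hb d
      _ = Real.exp ((d:ℕ) * (2 / d)) := (Real.exp_nat_mul _ d).symm
      _ = Real.exp 2 := by rw [mul_div_cancel₀]; exact ne_of_gt hdR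
      _ ≤ 9 := hexp2
  exact mul_le_mul_of_nonneg_right h2 (pow_nonneg hR.le d)

open scoped ENNReal in
/-- With probability at least `1 - β` over a uniformly random shift in `[0,R]^d`,
the number of grid cells within squared distance `R²/d²` of `S` is `O(|S|/β)`. -/
theorem random_shift_close_cells :
    ∃ c : ℝ, 0 < c ∧
      ∀ (d : ℕ) (R : ℝ) (S : Finset (Fin d → ℝ)) (β : ℝ),
        0 < d → 0 < R → β ∈ Set.Ioo (0:ℝ) 1 →
        volume {γ : Fin d → ℝ | γ ∈ Set.Icc 0 (fun _ => R) ∧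
            c * (S.card : ℝ) / β < (closeCellCount d R S γ : ℝ)}
          ≤ ENNReal.ofReal (β * R ^ d) := by
  classical
  refine ⟨9, by norm_num, ?_⟩
  intro d R S β hd hR hβ
  obtain ⟨hβ0, hβ1⟩ := hβ
  by_cases hS : S.card = 0
  · have hSe : S = ∅ := Finset.card_eq_zero.mp hS
    have hempty : {γ : Fin d → ℝ | γ ∈ Set.Icc 0 (fun _ => R) ∧
        9 * (S.card : ℝ) / β < (closeCellCount d R S γ : ℝ)} = ∅ := by
      ext γ
      simp only [Set.mem_setOf_eq, Set.mem_empty_iff_false, iff_false, not_and]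
      intro _
      have : closeCellCount d R S γ = 0 := by
        rw [closeCellCount, hSe]
        simp
      rw [this, hS]
      simp
    rw [hempty, measure_empty]
    exact zero_le
  have hS1 : 0 < S.card := Nat.pos_of_ne_zero hS
  have hdR : (0:ℝ) < (d:ℝ) := by exact_mod_cast hd
  set x : ℝ := R / d with hxdef
  have hx : 0 ≤ x := le_of_lt (div_pos hR hdR)
  set a : ℝ := 9 * (S.card : ℝ) / β with hadef
  have hcard : (0:ℝ) < S.card := by exact_mod_cast hS1
  have ha : 0 < a := by positivity
  set G : (Fin d → ℝ) → ℝ≥0∞ := fun γ =>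
    ∑ s ∈ S, ∏ i, (Set.Icc (0:ℝ) R).indicator (Nfun R x (s i)) (γ i) with hGdef
  have hGmeas : Measurable G := by
    refine Finset.measurable_sum _ fun s _ => Finset.measurable_prod _ fun i _ => ?_
    exact ((measurable_Nfun R x (s i)).indicator measurableSet_Icc).comp
      (measurable_pi_apply i)
  have hsub : {γ : Fin d → ℝ | γ ∈ Set.Icc 0 (fun _ => R) ∧
      a < (closeCellCount d R S γ : ℝ)} ⊆ {γ | ENNReal.ofReal a ≤ G γ} := by
    rintro γ ⟨hbox, hlt⟩
    have hmem : ∀ i, γ i ∈ Set.Icc (0:ℝ) R := fun i => ⟨hbox.1 i, hbox.2 i⟩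
    have hG : G γ = ∑ s ∈ S, ∏ i, ((Fset R x (s i) (γ i)).card : ℝ≥0∞) := by
      refine Finset.sum_congr rfl fun s _ => Finset.prod_congr rfl fun i _ => ?_
      rw [Set.indicator_of_mem (hmem i), Nfun_eq hR]
    show ENNReal.ofReal a ≤ G γ
    calc ENNReal.ofReal a ≤ ENNReal.ofReal ((closeCellCount d R S γ : ℝ)) :=
          ENNReal.ofReal_le_ofReal hlt.le
      _ = (closeCellCount d R S γ : ℝ≥0∞) := ENNReal.ofReal_natCast _
      _ ≤ ∑ s ∈ S, ∏ i, ((Fset R x (s i) (γ i)).card : ℝ≥0∞) :=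
          closeCellCount_le hd hR
      _ = G γ := hG.symm
  have hofa0 : ENNReal.ofReal a ≠ 0 := ne_of_gt (ENNReal.ofReal_pos.mpr ha)
  have hint : ∫⁻ γ, G γ ≤ (S.card : ℝ≥0∞) * ENNReal.ofReal ((2 * x + R)^d) := by
    rw [hGdef, lintegral_finset_sum _ (fun s _ => Finset.measurable_prod _ fun i _ =>
      ((measurable_Nfun R x (s i)).indicator measurableSet_Icc).comp
        (measurable_pi_apply i))]
    have hone : ∀ s ∈ S, (∫⁻ γ : Fin d → ℝ,
        ∏ i, (Set.Icc (0:ℝ) R).indicator (Nfun R x (s i)) (γ i))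
        ≤ ENNReal.ofReal ((2 * x + R)^d) := by
      intro s _
      rw [lintegral_pi_prod _ (fun i =>
        (measurable_Nfun R x (s i)).indicator measurableSet_Icc)]
      calc ∏ i, ∫⁻ t, (Set.Icc (0:ℝ) R).indicator (Nfun R x (s i)) t
          ≤ ∏ _i : Fin d, ENNReal.ofReal (2 * x + R) := by
            refine Finset.prod_le_prod' fun i _ => ?_
            rw [lintegral_indicator measurableSet_Icc]
            exact lintegral_Nfun hR hx
        _ = ENNReal.ofReal (2 * x + R) ^ d := by
            rw [Finset.prod_const, Finset.card_univ, Fintype.card_fin]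
        _ = ENNReal.ofReal ((2 * x + R)^d) := by
            rw [ENNReal.ofReal_pow (by linarith)]
    calc ∑ s ∈ S, ∫⁻ γ : Fin d → ℝ,
          ∏ i, (Set.Icc (0:ℝ) R).indicator (Nfun R x (s i)) (γ i)
        ≤ ∑ _s ∈ S, ENNReal.ofReal ((2 * x + R)^d) := Finset.sum_le_sum hone
      _ = (S.card : ℝ≥0∞) * ENNReal.ofReal ((2 * x + R)^d) := by
          rw [Finset.sum_const, nsmul_eq_mul]
  calc volume {γ : Fin d → ℝ | γ ∈ Set.Icc 0 (fun _ => R) ∧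
        9 * (S.card : ℝ) / β < (closeCellCount d R S γ : ℝ)}
      ≤ volume {γ : Fin d → ℝ | ENNReal.ofReal a ≤ G γ} := measure_mono hsub
    _ ≤ (∫⁻ γ, G γ) / ENNReal.ofReal a :=
        meas_ge_le_lintegral_div hGmeas.aemeasurable hofa0 ENNReal.ofReal_ne_top
    _ ≤ ((S.card : ℝ≥0∞) * ENNReal.ofReal ((2 * x + R)^d)) / ENNReal.ofReal a :=
        ENNReal.div_le_div_right hint _
    _ ≤ ENNReal.ofReal (β * R ^ d) := by
        refine ENNReal.div_le_of_le_mul ?_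
        rw [← ENNReal.ofReal_natCast S.card, ← ENNReal.ofReal_mul (Nat.cast_nonneg _),
          ← ENNReal.ofReal_mul (by positivity)]
        refine ENNReal.ofReal_le_ofReal ?_
        have hpow : (2 * x + R)^d ≤ 9 * R^d := pow_bound_nine hd hR
        have hrhs : β * R ^ d * a = 9 * (S.card : ℝ) * R ^ d := by
          rw [hadef]; field_simp
        rw [hrhs]
        nlinarith [pow_pos hR d, hcard]
end

section
/- For a uniformly random grid of cells with side length R in ℝ^d, the expected number of cells within ℓ₂ distance x of a fixed point s (for 0 ≤ x < R/2) is at most (1 + 2x/R)^d. -/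
set_option maxHeartbeats 1000000

open MeasureTheory ENNReal

/-- Fubini for lintegral over pi of ℝ, product of coordinate functions. -/
lemma lintegral_fin_prod' {n : ℕ} (f : Fin n → ℝ → ℝ≥0∞) (hf : ∀ i, Measurable (f i)) :
    ∫⁻ x : Fin n → ℝ, ∏ i, f i (x i) = ∏ i, ∫⁻ t, f i t := by
  induction n with
  | zero => simp [volume_pi, lintegral_const]
  | succ n ih =>
    have hmp := ((measurePreserving_piFinSuccAbove (fun _ : Fin (n+1) => (volume : Measure ℝ)) 0).symm)
    rw [volume_pi, ← hmp.lintegral_comp_emb (MeasurableEquiv.measurableEmbedding _)]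
    simp_rw [MeasurableEquiv.piFinSuccAbove_symm_apply, Fin.insertNthEquiv,
      Fin.prod_univ_succ, Fin.insertNth_zero, Equiv.coe_fn_mk, Fin.cons_succ,
      Fin.cons_zero]
    simp only [Fin.zero_succAbove, cast_eq]
    rw [lintegral_prod_mul (f := f 0) (g := fun y : Fin n → ℝ => ∏ i, f i.succ (y i)) (hf 0).aemeasurable
      ((Finset.measurable_prod _ fun i _ => (hf i.succ).comp (measurable_pi_apply i)).aemeasurable)]
    rw [← volume_pi, ih (fun i => f i.succ) (fun i => hf i.succ)]


/-- per-axis slab-count function, with indicator of `[0,R]`. -/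
noncomputable def gFun (R a b : ℝ) : ℝ → ℝ≥0∞ :=
  (Set.Icc (0:ℝ) R).indicator
    (fun t => (((⌊(b - t)/R⌋ - ⌊(a - t)/R⌋ + 1).toNat : ℕ) : ℝ≥0∞))

lemma gFun_measurable (R a b : ℝ) : Measurable (gFun R a b) := by
  unfold gFun
  have h1 : Measurable fun t : ℝ => ⌊(b - t)/R⌋ - ⌊(a - t)/R⌋ + 1 :=
    (((measurable_const.sub measurable_id).div_const R).floor.sub
      ((measurable_const.sub measurable_id).div_const R).floor).add_const 1
  have h2 : Measurable fun t : ℝ => (⌊(b - t)/R⌋ - ⌊(a - t)/R⌋ + 1).toNat :=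
    (measurable_of_countable Int.toNat).comp h1
  have h3 : Measurable fun t : ℝ => (((⌊(b - t)/R⌋ - ⌊(a - t)/R⌋ + 1).toNat : ℕ) : ℝ≥0∞) :=
    (measurable_of_countable (fun n : ℕ => (n : ℝ≥0∞))).comp h2
  exact h3.indicator measurableSet_Icc

lemma gFun_apply_mem (R a b t : ℝ) (ht : t ∈ Set.Icc (0:ℝ) R) :
    gFun R a b t = (((⌊(b - t)/R⌋ - ⌊(a - t)/R⌋ + 1).toNat : ℕ) : ℝ≥0∞) :=
  Set.indicator_of_mem ht _

lemma oneDim_bound (R a b : ℝ) (hR : 0 < R) (hab : a ≤ b) (hba : b - a < R) :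
    ∫⁻ t : ℝ, (Set.Icc (0:ℝ) R).indicator
      (fun t => (((⌊(b - t)/R⌋ - ⌊(a - t)/R⌋ + 1).toNat : ℕ) : ℝ≥0∞)) t
      ≤ ENNReal.ofReal (R + (b - a)) := by
  set E : Set ℝ := ⋃ k : ℤ, Set.Ioc (a - k*R) (b - k*R) with hE
  have hEm : MeasurableSet E := MeasurableSet.iUnion (fun k => measurableSet_Ioc)
  have hpt : ∀ t, (Set.Icc (0:ℝ) R).indicator
      (fun t => (((⌊(b - t)/R⌋ - ⌊(a - t)/R⌋ + 1).toNat : ℕ) : ℝ≥0∞)) t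
      ≤ (Set.Icc (0:ℝ) R).indicator 1 t + (E ∩ Set.Icc 0 R).indicator 1 t := by
    intro t
    by_cases ht : t ∈ Set.Icc (0:ℝ) R
    · rw [Set.indicator_of_mem ht, Set.indicator_of_mem ht]
      have hAB : ⌊(a - t)/R⌋ ≤ ⌊(b - t)/R⌋ :=
        Int.floor_le_floor (by gcongr)
      have hBA1 : ⌊(b - t)/R⌋ ≤ ⌊(a - t)/R⌋ + 1 := by
        have hd : (b - t)/R - (a - t)/R = (b - a)/R := by ring
        have hd1 : (b - a)/R < 1 := (div_lt_one hR).2 hba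
        have h1 : (b - t)/R < (a - t)/R + 1 := by linarith
        calc ⌊(b - t)/R⌋ ≤ ⌊(a - t)/R + 1⌋ := Int.floor_le_floor h1.le
          _ = ⌊(a - t)/R⌋ + 1 := by
            rw [show ((1:ℝ) = ((1:ℤ):ℝ)) by norm_num, Int.floor_add_intCast]
      rcases eq_or_lt_of_le hAB with hEq | hLt
      · rw [← hEq]
        simp
      · have htE : t ∈ E := by
          refine Set.mem_iUnion.2 ⟨⌊(b - t)/R⌋, ?_, ?_⟩
          · have h2 : (a - t)/R < (⌊(b - t)/R⌋ : ℝ) := by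
              have h3 := Int.lt_floor_add_one ((a - t)/R)
              have h4 : (⌊(a - t)/R⌋ : ℝ) + 1 ≤ (⌊(b - t)/R⌋ : ℝ) := by exact_mod_cast hLt
              linarith
            rw [div_lt_iff₀ hR] at h2
            linarith
          · have h3 : (⌊(b - t)/R⌋ : ℝ) ≤ (b - t)/R := Int.floor_le _
            rw [le_div_iff₀ hR] at h3
            linarith
        rw [Set.indicator_of_mem (Set.mem_inter htE ht)]
        have : ⌊(b - t)/R⌋ = ⌊(a - t)/R⌋ + 1 := by omega
        rw [this]
        norm_num
    · rw [Set.indicator_of_notMem ht]; exact zero_le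
  have hvol : volume (E ∩ Set.Icc (0:ℝ) R) ≤ ENNReal.ofReal (b - a) := by
    set m : ℤ := ⌊b/R⌋ with hm
    have hsub : E ∩ Set.Icc (0:ℝ) R ⊆
        Set.Icc (max (a - m*R) 0) (b - m*R) ∪ Set.Icc (a - (m-1)*R) R := by
      rintro t ⟨htE, ht0, htR⟩
      obtain ⟨k, hk1, hk2⟩ := Set.mem_iUnion.1 htE
      have hkm : k ≤ m := by
        have h5 : (k:ℝ) * R ≤ b := by linarith
        have h6 : (k:ℝ) ≤ b / R := by rw [le_div_iff₀ hR]; linarith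
        exact Int.le_floor.2 h6
      have hkm2 : m - 1 ≤ k := by
        have h4 : b / R < ((k:ℤ) + 2 : ℤ) := by
          rw [div_lt_iff₀ hR]
          push_cast
          nlinarith
        have := Int.floor_lt.2 h4
        omega
      rcases (by omega : k = m - 1 ∨ k = m) with rfl | rfl
      · right
        refine ⟨?_, htR⟩
        push_cast at hk1 ⊢
        linarith
      · left
        exact ⟨max_le hk1.le ht0, hk2⟩
    have hmb : (m:ℝ) * R ≤ b := by
      have := Int.floor_le (b/R)
      rw [← hm] at this
      calc (m:ℝ) * R ≤ (b/R) * R := by nlinarith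
        _ = b := by field_simp
    have hbm : b < (m:ℝ) * R + R := by
      have := Int.lt_floor_add_one (b/R)
      rw [← hm] at this
      have := (div_lt_iff₀ hR).1 this
      linarith
    calc volume (E ∩ Set.Icc (0:ℝ) R)
        ≤ volume (Set.Icc (max (a - m*R) 0) (b - m*R)) + volume (Set.Icc (a - (m-1)*R) R) :=
          le_trans (measure_mono hsub) (measure_union_le _ _)
      _ ≤ ENNReal.ofReal (b - a) := by
          rw [Real.volume_Icc, Real.volume_Icc]
          rcases le_or_gt 0 (a - m*R) with h | h
          · rw [max_eq_left h]
            have h7 : R - (a - (m-1)*R) ≤ 0 := by push_cast; nlinarith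
            rw [ENNReal.ofReal_eq_zero.2 (by linarith : R - (a - ((m:ℝ)-1) * R) ≤ 0), add_zero]
            apply ENNReal.ofReal_le_ofReal
            linarith
          · rw [max_eq_right h.le]
            have h8 : (0:ℝ) ≤ b - m*R := by linarith
            have h9 : (0:ℝ) ≤ R - (a - ((m:ℝ)-1) * R) := by nlinarith
            rw [sub_zero, ← ENNReal.ofReal_add h8 h9]
            apply ENNReal.ofReal_le_ofReal
            push_cast
            linarith
  calc ∫⁻ t : ℝ, (Set.Icc (0:ℝ) R).indicator
        (fun t => (((⌊(b - t)/R⌋ - ⌊(a - t)/R⌋ + 1).toNat : ℕ) : ℝ≥0∞)) t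
      ≤ ∫⁻ t, ((Set.Icc (0:ℝ) R).indicator 1 t + (E ∩ Set.Icc 0 R).indicator 1 t) :=
        lintegral_mono hpt
    _ = volume (Set.Icc (0:ℝ) R) + volume (E ∩ Set.Icc (0:ℝ) R) := by
        rw [lintegral_add_left ((measurable_one).indicator measurableSet_Icc),
          lintegral_indicator_one measurableSet_Icc,
          lintegral_indicator_one (hEm.inter measurableSet_Icc)]
    _ ≤ ENNReal.ofReal R + ENNReal.ofReal (b - a) := by
        rw [Real.volume_Icc]
        exact add_le_add (by simp) hvol
    _ = ENNReal.ofReal (R + (b - a)) := (ENNReal.ofReal_add hR.le (by linarith)).symm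


lemma card_bound (d : ℕ) (R x : ℝ) (s γ : Fin d → ℝ) (hR : 0 < R) (hx0 : 0 ≤ x) :
    (({j : Fin d → ℤ | ∃ y ∈ gridCell d R γ j, ∑ i, (s i - y i)^2 ≤ x^2}.ncard : ℕ) : ℝ≥0∞)
      ≤ ∏ i, (((⌊(s i + x - γ i)/R⌋ - ⌊(s i - x - γ i)/R⌋ + 1).toNat : ℕ) : ℝ≥0∞) := by
  set A : Fin d → ℤ := fun i => ⌊(s i - x - γ i)/R⌋ with hA
  set B : Fin d → ℤ := fun i => ⌊(s i + x - γ i)/R⌋ with hB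
  have hsub : {j : Fin d → ℤ | ∃ y ∈ gridCell d R γ j, ∑ i, (s i - y i)^2 ≤ x^2}
      ⊆ ↑(Fintype.piFinset fun i => Finset.Icc (A i) (B i)) := by
    rintro j ⟨y, hy, hsum⟩
    simp only [Finset.coe_sort_coe, Finset.mem_coe, Fintype.mem_piFinset, Finset.mem_Icc]
    intro i
    have habs : |s i - y i| ≤ x := by
      have h1 : (s i - y i)^2 ≤ x^2 := by
        refine le_trans ?_ hsum
        exact Finset.single_le_sum (f := fun i => (s i - y i)^2) (fun i _ => sq_nonneg _) (Finset.mem_univ i)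
      have := Real.sqrt_le_sqrt h1
      rwa [Real.sqrt_sq_eq_abs, Real.sqrt_sq hx0] at this
    obtain ⟨hy1, hy2⟩ := hy i
    obtain ⟨ha1, ha2⟩ := abs_le.1 habs
    constructor
    · have h2 : (s i - x - γ i)/R < (j i : ℝ) + 1 := by
        rw [div_lt_iff₀ hR]
        push_cast
        nlinarith
      have h3 : A i < j i + 1 :=
        Int.floor_lt.2 (by exact_mod_cast h2 : (s i - x - γ i)/R < ((j i + 1 : ℤ) : ℝ))
      omega
    · refine Int.le_floor.2 ?_
      rw [le_div_iff₀ hR]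
      push_cast
      nlinarith
  calc (({j : Fin d → ℤ | ∃ y ∈ gridCell d R γ j, ∑ i, (s i - y i)^2 ≤ x^2}.ncard : ℕ) : ℝ≥0∞)
      ≤ (((Fintype.piFinset fun i => Finset.Icc (A i) (B i)) : Set (Fin d → ℤ)).ncard : ℝ≥0∞) := by
        exact_mod_cast Nat.cast_le.2 (Set.ncard_le_ncard hsub (Finset.finite_toSet _))
    _ = ∏ i, (((B i - A i + 1).toNat : ℕ) : ℝ≥0∞) := by
        rw [Set.ncard_coe_finset, Fintype.card_piFinset]
        push_cast
        refine Finset.prod_congr rfl fun i _ => ?_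
        rw [Int.card_Icc]
        congr 1
        omega

/-- For a uniformly random shift in `[0,R]^d`, the expected number of cells within
ℓ₂ distance `x` of a fixed point `s` (for `0 ≤ x < R/2`) is at most `(1 + 2x/R)^d`. -/
theorem expected_close_cells (d : ℕ) (R x : ℝ) (s : Fin d → ℝ)
    (hd : 0 < d) (hR : 0 < R) (hx0 : 0 ≤ x) (hx : x < R / 2) :
    ∫⁻ γ in Set.Icc (0 : Fin d → ℝ) (fun _ => R),
        (({j : Fin d → ℤ | ∃ y ∈ gridCell d R γ j,
            ∑ i, (s i - y i)^2 ≤ x^2}.ncard : ℝ≥0∞))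
      ≤ ENNReal.ofReal ((1 + 2 * x / R) ^ d * R ^ d) := by
  have h2x : 0 ≤ 2 * x := by linarith
  calc ∫⁻ γ in Set.Icc (0 : Fin d → ℝ) (fun _ => R),
        (({j : Fin d → ℤ | ∃ y ∈ gridCell d R γ j, ∑ i, (s i - y i)^2 ≤ x^2}.ncard : ℝ≥0∞))
      = ∫⁻ γ, (Set.Icc (0 : Fin d → ℝ) (fun _ => R)).indicator
          (fun γ => (({j : Fin d → ℤ | ∃ y ∈ gridCell d R γ j,
            ∑ i, (s i - y i)^2 ≤ x^2}.ncard : ℝ≥0∞))) γ :=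
        (lintegral_indicator measurableSet_Icc _).symm
    _ ≤ ∫⁻ γ : Fin d → ℝ, ∏ i, gFun R (s i - x) (s i + x) (γ i) := by
        refine lintegral_mono fun γ => ?_
        by_cases hγ : γ ∈ Set.Icc (0 : Fin d → ℝ) (fun _ => R)
        · rw [Set.indicator_of_mem hγ]
          have hγi : ∀ i, γ i ∈ Set.Icc (0:ℝ) R := fun i => ⟨hγ.1 i, hγ.2 i⟩
          have heq : ∏ i, gFun R (s i - x) (s i + x) (γ i)
              = ∏ i, (((⌊(s i + x - γ i)/R⌋ - ⌊(s i - x - γ i)/R⌋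
              + 1).toNat : ℕ) : ℝ≥0∞) :=
            Finset.prod_congr rfl fun i _ => gFun_apply_mem _ _ _ _ (hγi i)
          rw [heq]
          exact card_bound d R x s γ hR hx0
        · rw [Set.indicator_of_notMem hγ]
          exact zero_le
    _ = ∏ i, ∫⁻ t, gFun R (s i - x) (s i + x) t :=
        lintegral_fin_prod' (fun i => gFun R (s i - x) (s i + x))
          (fun i => gFun_measurable _ _ _)
    _ ≤ ∏ _i : Fin d, ENNReal.ofReal (R + 2 * x) := by
        refine Finset.prod_le_prod' fun i _ => ?_
        have hb := oneDim_bound R (s i - x) (s i + x) hR (by linarith) (by linarith)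
        have heq : s i + x - (s i - x) = 2 * x := by ring
        rw [heq] at hb
        exact hb
    _ = ENNReal.ofReal ((1 + 2 * x / R) ^ d * R ^ d) := by
        rw [Finset.prod_const, Finset.card_univ, Fintype.card_fin,
          ← ENNReal.ofReal_pow (by linarith)]
        congr 1
        rw [← mul_pow]
        congr 1
        field_simp
end

section
/- Let C ⊆ D ⊆ ℝ^d where C has diameter at most r and D has diameter at most Δ. Fix x₀ ∈ C, and suppose the set of points colliding with x₀ under a hash function H is partitioned into N' = {y : H(y)=H(x₀), ‖y−x₀‖ < cr} and F = {y : H(y)=H(x₀), ‖y−x₀‖ ≥ cr}. If |N'| ≥ (p/2)|C| and |F| ≤ (4q/p)|D|, then the average x̂₀ of all points colliding with x₀ satisfies ‖x₀ − x̂₀‖ ≤ cr + (8q|D|)/(p²|C|)·Δ. -/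
/-- Bucket-average guarantee: the average over colliding points (near points `N'` together
with false positives `F`) lies within `cr + (8q|D|)/(p²|C|)·Δ` of `x₀`. -/
theorem lsh_bucket_average (d : ℕ)
    (D C N' F : Finset (EuclideanSpace ℝ (Fin d)))
    (hCD : C ⊆ D) (hN'D : N' ⊆ D) (hFD : F ⊆ D)
    (hC : C.Nonempty)
    (x₀ : EuclideanSpace ℝ (Fin d)) (hx₀ : x₀ ∈ C)
    (p q r c Δ : ℝ) (hp : p ≤ 1) (hp0 : 0 < p) (hq : 0 < q) (hqp : q < p)
    (hc : 1 < c) (hr : 0 < r) (hΔ : 0 ≤ Δ)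
    (hDdiam : ∀ u ∈ D, ∀ v ∈ D, dist u v ≤ Δ)
    (hCdiam : ∀ u ∈ C, ∀ v ∈ C, dist u v ≤ r)
    (hNnear : ∀ y ∈ N', dist y x₀ < c * r)
    (hFfar : ∀ y ∈ F, c * r ≤ dist y x₀)
    (hNcard : (p / 2) * (C.card : ℝ) ≤ (N'.card : ℝ))
    (hFcard : (F.card : ℝ) ≤ (4 * q / p) * (D.card : ℝ))
    (xhat : EuclideanSpace ℝ (Fin d))
    (hxhat : xhat = ((N'.card : ℝ) + (F.card : ℝ))⁻¹ •
      ((∑ y ∈ N', y) + (∑ y ∈ F, y))) :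
    dist x₀ xhat ≤ c * r + (8 * q * (D.card : ℝ)) / (p^2 * (C.card : ℝ)) * Δ := by
  set n : ℝ := (N'.card : ℝ) with hn_def
  set f : ℝ := (F.card : ℝ) with hf_def
  have hC0 : (0:ℝ) < (C.card : ℝ) := by exact_mod_cast Finset.card_pos.mpr hC
  have hn : 0 < n := lt_of_lt_of_le (by positivity) hNcard
  have hf0 : 0 ≤ f := Nat.cast_nonneg _
  have hnf : 0 < n + f := by linarith
  have hcr : 0 < c * r := by positivity
  -- rewrite x₀ - xhat
  have hx : x₀ - xhat = (n + f)⁻¹ •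
      ((∑ y ∈ N', (x₀ - y)) + (∑ y ∈ F, (x₀ - y))) := by
    rw [hxhat, Finset.sum_sub_distrib, Finset.sum_sub_distrib,
      Finset.sum_const, Finset.sum_const]
    rw [← Nat.cast_smul_eq_nsmul ℝ, ← Nat.cast_smul_eq_nsmul ℝ]
    rw [show (N'.card : ℝ) • x₀ - ∑ y ∈ N', y + ((F.card : ℝ) • x₀ - ∑ y ∈ F, y)
        = (n + f) • x₀ - ((∑ y ∈ N', y) + (∑ y ∈ F, y)) by
      rw [add_smul]; abel]
    rw [smul_sub, smul_smul, inv_mul_cancel₀ hnf.ne', one_smul]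
  have hnorm : dist x₀ xhat ≤ (n + f)⁻¹ * (n * (c * r) + f * Δ) := by
    rw [dist_eq_norm, hx, norm_smul]
    have h1 : ‖∑ y ∈ N', (x₀ - y)‖ ≤ n * (c * r) := by
      calc ‖∑ y ∈ N', (x₀ - y)‖ ≤ ∑ y ∈ N', ‖x₀ - y‖ := norm_sum_le _ _
        _ ≤ ∑ _y ∈ N', (c * r) := by
            refine Finset.sum_le_sum fun y hy => ?_
            rw [← dist_eq_norm, dist_comm]
            exact le_of_lt (hNnear y hy)
        _ = n * (c * r) := by rw [Finset.sum_const, nsmul_eq_mul]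
    have h2 : ‖∑ y ∈ F, (x₀ - y)‖ ≤ f * Δ := by
      calc ‖∑ y ∈ F, (x₀ - y)‖ ≤ ∑ y ∈ F, ‖x₀ - y‖ := norm_sum_le _ _
        _ ≤ ∑ _y ∈ F, Δ := by
            refine Finset.sum_le_sum fun y hy => ?_
            rw [← dist_eq_norm]
            exact hDdiam x₀ (hCD hx₀) y (hFD hy)
        _ = f * Δ := by rw [Finset.sum_const, nsmul_eq_mul]
    have hle : ‖(∑ y ∈ N', (x₀ - y)) + (∑ y ∈ F, (x₀ - y))‖
        ≤ n * (c * r) + f * Δ := le_trans (norm_add_le _ _) (add_le_add h1 h2)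
    rw [Real.norm_eq_abs, abs_of_pos (inv_pos.mpr hnf)]
    exact mul_le_mul_of_nonneg_left hle (le_of_lt (inv_pos.mpr hnf))
  set B : ℝ := (8 * q * (D.card : ℝ)) / (p^2 * (C.card : ℝ)) * Δ with hB_def
  have hB0 : 0 ≤ B := by
    have hD0 : (0:ℝ) ≤ (D.card : ℝ) := Nat.cast_nonneg _
    positivity
  have hkey : f * Δ ≤ n * B := by
    have h1 : f * Δ ≤ (4 * q / p) * (D.card : ℝ) * Δ :=
      mul_le_mul_of_nonneg_right hFcard hΔ
    have h2 : (p / 2) * (C.card : ℝ) * B = (4 * q / p) * (D.card : ℝ) * Δ := by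
      rw [hB_def]
      field_simp
      ring
    have h3 : (p / 2) * (C.card : ℝ) * B ≤ n * B :=
      mul_le_mul_of_nonneg_right hNcard hB0
    linarith
  have hfinal : (n + f)⁻¹ * (n * (c * r) + f * Δ) ≤ c * r + B := by
    rw [inv_mul_le_iff₀ hnf]
    have hfcr : 0 ≤ f * (c * r) := by positivity
    have hfB : 0 ≤ f * B := mul_nonneg hf0 hB0
    nlinarith
  exact le_trans hnorm hfinal
end

section
/- Let D and D* be finite multisets in ℝ^d, S a finite set, and suppose D* consists of each s ∈ S repeated n̂_s times where |n̂_s − |D(s)|| ≤ E for all s, with D(s) = {p ∈ D : s = argmin_{s'∈S} ‖p−s'‖²}. Then for any finite set S₁ ⊆ ℝ^d, f_{D*}(S₁) ≤ 2·f_D(S) + 2·f_D(S₁) + E·|S|·Δ² and f_D(S₁) ≤ 2·f_D(S) + 2·f_{D*}(S₁) + E·|S|·Δ², where Δ bounds the diameter of the domain containing all points. -/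
open Classical in

/-- The k-means cost functions of the data set `D` and the proxy data set `D*`
(each candidate center `s ∈ S` repeated `n̂ s` times, where `n̂ s` estimates the
size of the cluster of `D` assigned to `s` within error `E`) are close. -/
theorem proxy_dataset_cost (d : ℕ)
    (D : Finset (EuclideanSpace ℝ (Fin d)))
    (S S₁ : Finset (EuclideanSpace ℝ (Fin d)))
    (hS : S.Nonempty) (hS₁ : S₁.Nonempty)
    (a : EuclideanSpace ℝ (Fin d) → EuclideanSpace ℝ (Fin d))
    (ha : ∀ p ∈ D, a p ∈ S)
    (hamin : ∀ p ∈ D, ∀ s ∈ S, dist p (a p) ≤ dist p s)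
    (nhat : EuclideanSpace ℝ (Fin d) → ℕ)
    (E Δ : ℝ) (hE : 0 ≤ E) (hΔ : 0 ≤ Δ)
    (hdiam : ∀ x ∈ (D : Set (EuclideanSpace ℝ (Fin d))) ∪ S ∪ S₁,
      ∀ y ∈ (D : Set (EuclideanSpace ℝ (Fin d))) ∪ S ∪ S₁, dist x y ≤ Δ)
    (hcount : ∀ s ∈ S,
      |(nhat s : ℝ) - ((D.filter (fun p => a p = s)).card : ℝ)| ≤ E)
    (fD : Finset (EuclideanSpace ℝ (Fin d)) → ℝ)
    (hfD : ∀ (T : Finset (EuclideanSpace ℝ (Fin d))) (hT : T.Nonempty),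
      fD T = ∑ p ∈ D, T.inf' hT (fun s => dist p s ^ 2))
    (fDstar : ℝ)
    (hfDstar : fDstar = ∑ s ∈ S, (nhat s : ℝ) * S₁.inf' hS₁ (fun s₁ => dist s s₁ ^ 2)) :
    fDstar ≤ 2 * fD S + 2 * fD S₁ + E * (S.card : ℝ) * Δ^2
    ∧ fD S₁ ≤ 2 * fD S + 2 * fDstar + E * (S.card : ℝ) * Δ^2 := by
  classical
  have trig : ∀ x y z : EuclideanSpace ℝ (Fin d),
      dist x z ^ 2 ≤ 2 * dist x y ^ 2 + 2 * dist y z ^ 2 := by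
    intro x y z
    have h1 : dist x z ^ 2 ≤ (dist x y + dist y z) ^ 2 :=
      pow_le_pow_left₀ dist_nonneg (dist_triangle x y z) 2
    nlinarith [sq_nonneg (dist x y - dist y z)]
  set I₁ : EuclideanSpace ℝ (Fin d) → ℝ :=
    fun p => S₁.inf' hS₁ (fun s₁ => dist p s₁ ^ 2) with hI₁def
  have hI₁nonneg : ∀ p, 0 ≤ I₁ p := fun p =>
    Finset.le_inf' hS₁ _ fun t _ => sq_nonneg _
  have hmemD : ∀ p ∈ D, p ∈ (D : Set (EuclideanSpace ℝ (Fin d))) ∪ ↑S ∪ ↑S₁ := fun p hp =>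
    Set.mem_union_left _ (Set.mem_union_left _ hp)
  have hmemS : ∀ s ∈ S, s ∈ (D : Set (EuclideanSpace ℝ (Fin d))) ∪ ↑S ∪ ↑S₁ := fun s hs =>
    Set.mem_union_left _ (Set.mem_union_right _ hs)
  have hmemS₁ : ∀ t ∈ S₁, t ∈ (D : Set (EuclideanSpace ℝ (Fin d))) ∪ ↑S ∪ ↑S₁ := fun t ht =>
    Set.mem_union_right _ ht
  have hI₁le : ∀ x ∈ (D : Set (EuclideanSpace ℝ (Fin d))) ∪ ↑S ∪ ↑S₁, I₁ x ≤ Δ ^ 2 := by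
    intro x hx
    obtain ⟨t, ht⟩ := hS₁
    refine le_trans (Finset.inf'_le _ ht) ?_
    have h := hdiam x hx t (hmemS₁ t ht)
    nlinarith [dist_nonneg (x := x) (y := t)]
  -- cost of D w.r.t. S is the sum of squared distances to assigned centers
  have hfDS : fD S = ∑ p ∈ D, dist p (a p) ^ 2 := by
    rw [hfD S hS]
    refine Finset.sum_congr rfl fun p hp => ?_
    refine le_antisymm (Finset.inf'_le _ (ha p hp)) ?_
    exact Finset.le_inf' _ _ fun s hs =>
      pow_le_pow_left₀ dist_nonneg (hamin p hp s hs) 2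
  have hfDS₁ : fD S₁ = ∑ p ∈ D, I₁ p := hfD S₁ hS₁
  have hfib : ∀ g : EuclideanSpace ℝ (Fin d) → ℝ,
      ∑ s ∈ S, ∑ p ∈ D.filter (fun p => a p = s), g p = ∑ p ∈ D, g p := fun g =>
    Finset.sum_fiberwise_of_maps_to ha g
  -- pointwise bound with assigned center as intermediate, both directions
  have hpt₁ : ∀ p ∈ D, I₁ (a p) ≤ 2 * dist p (a p) ^ 2 + 2 * I₁ p := by
    intro p hp
    obtain ⟨t, ht, hteq⟩ := S₁.exists_mem_eq_inf' hS₁ (fun s₁ => dist p s₁ ^ 2)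
    have h1 : I₁ (a p) ≤ dist (a p) t ^ 2 := Finset.inf'_le _ ht
    have h2 := trig (a p) p t
    rw [dist_comm (a p) p] at h2
    simp only [hI₁def]
    rw [hteq] at *
    linarith
  have hpt₂ : ∀ p ∈ D, I₁ p ≤ 2 * dist p (a p) ^ 2 + 2 * I₁ (a p) := by
    intro p hp
    obtain ⟨t, ht, hteq⟩ := S₁.exists_mem_eq_inf' hS₁ (fun s₁ => dist (a p) s₁ ^ 2)
    have h1 : I₁ p ≤ dist p t ^ 2 := Finset.inf'_le _ ht
    have h2 := trig p (a p) t
    simp only [hI₁def]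
    rw [hteq] at *
    linarith
  -- sum over the cluster of s of I₁ ∘ a equals card • I₁ s
  have hclsum : ∀ s ∈ S, ∑ p ∈ D.filter (fun p => a p = s), I₁ (a p)
      = ((D.filter (fun p => a p = s)).card : ℝ) * I₁ s := by
    intro s hs
    rw [Finset.sum_congr rfl (fun p hp => ?_), Finset.sum_const, nsmul_eq_mul]
    rw [(Finset.mem_filter.mp hp).2]
  -- First inequality
  have first : fDstar ≤ 2 * fD S + 2 * fD S₁ + E * (S.card : ℝ) * Δ ^ 2 := by
    have step1 : fDstar ≤ ∑ s ∈ S,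
        (((D.filter (fun p => a p = s)).card : ℝ) * I₁ s + E * Δ ^ 2) := by
      rw [hfDstar]
      refine Finset.sum_le_sum fun s hs => ?_
      have hc := abs_le.mp (hcount s hs)
      have hIn := hI₁nonneg s
      have hIl := hI₁le s (hmemS s hs)
      nlinarith [mul_le_mul_of_nonneg_right hc.2 hIn,
        mul_le_mul_of_nonneg_left hIl hE]
    have step2 : ∑ s ∈ S, ((D.filter (fun p => a p = s)).card : ℝ) * I₁ s
        = ∑ p ∈ D, I₁ (a p) := by
      rw [← hfib (fun p => I₁ (a p))]
      exact Finset.sum_congr rfl fun s hs => (hclsum s hs).symm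
    have step3 : ∑ p ∈ D, I₁ (a p) ≤ 2 * fD S + 2 * fD S₁ := by
      rw [hfDS, hfDS₁, Finset.mul_sum, Finset.mul_sum, ← Finset.sum_add_distrib]
      exact Finset.sum_le_sum hpt₁
    rw [Finset.sum_add_distrib, Finset.sum_const, nsmul_eq_mul, step2] at step1
    calc fDstar ≤ (2 * fD S + 2 * fD S₁) + (S.card : ℝ) * (E * Δ ^ 2) := by
            linarith
      _ = 2 * fD S + 2 * fD S₁ + E * (S.card : ℝ) * Δ ^ 2 := by ring
  refine ⟨first, ?_⟩
  -- Second inequality, cluster by cluster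
  have key : ∀ s ∈ S, ∑ p ∈ D.filter (fun p => a p = s), I₁ p
      ≤ 2 * (∑ p ∈ D.filter (fun p => a p = s), dist p (a p) ^ 2)
        + 2 * ((nhat s : ℝ) * I₁ s) + E * Δ ^ 2 := by
    intro s hs
    set F := D.filter (fun p => a p = s) with hF
    have hsub : ∀ p ∈ F, p ∈ D := fun p hp => (Finset.mem_filter.mp hp).1
    have h1 : ∑ p ∈ F, I₁ p ≤ (F.card : ℝ) * Δ ^ 2 := by
      calc ∑ p ∈ F, I₁ p ≤ ∑ p ∈ F, Δ ^ 2 :=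
            Finset.sum_le_sum fun p hp => hI₁le p (hmemD p (hsub p hp))
        _ = (F.card : ℝ) * Δ ^ 2 := by rw [Finset.sum_const, nsmul_eq_mul]
    have h2 : ∑ p ∈ F, I₁ p ≤ 2 * (∑ p ∈ F, dist p (a p) ^ 2)
        + 2 * ((F.card : ℝ) * I₁ s) := by
      have hpw : ∀ p ∈ F, I₁ p ≤ 2 * dist p (a p) ^ 2 + 2 * I₁ s := by
        intro p hp
        have h := hpt₂ p (hsub p hp)
        rw [(Finset.mem_filter.mp hp).2] at h ⊢
        exact h
      calc ∑ p ∈ F, I₁ p ≤ ∑ p ∈ F, (2 * dist p (a p) ^ 2 + 2 * I₁ s) :=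
            Finset.sum_le_sum hpw
        _ = 2 * (∑ p ∈ F, dist p (a p) ^ 2) + 2 * ((F.card : ℝ) * I₁ s) := by
            rw [Finset.sum_add_distrib, Finset.sum_const, nsmul_eq_mul,
              Finset.mul_sum]
            ring
    have hcE := abs_le.mp (hcount s hs)
    have hIn := hI₁nonneg s
    have hIl := hI₁le s (hmemS s hs)
    have hfn : 0 ≤ ∑ p ∈ F, dist p (a p) ^ 2 :=
      Finset.sum_nonneg fun p _ => sq_nonneg _
    have hn : (0:ℝ) ≤ (nhat s : ℝ) := Nat.cast_nonneg _
    rcases le_or_gt (2 * I₁ s) (Δ ^ 2) with h | h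
    · -- use h2
      nlinarith [mul_le_mul_of_nonneg_right (show ((F.card : ℝ) - (nhat s : ℝ)) ≤ E by
          linarith [hcE.1]) hIn, mul_le_mul_of_nonneg_left h hE]
    · -- use h1
      nlinarith [mul_le_mul_of_nonneg_right (show ((F.card : ℝ) - (nhat s : ℝ)) ≤ E by
          linarith [hcE.1]) (sq_nonneg Δ), mul_nonneg hn (by linarith : (0:ℝ) ≤ 2 * I₁ s - Δ ^ 2)]
  have total : ∑ p ∈ D, I₁ p ≤ 2 * fD S + 2 * fDstar + E * (S.card : ℝ) * Δ ^ 2 := by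
    rw [← hfib I₁]
    calc ∑ s ∈ S, ∑ p ∈ D.filter (fun p => a p = s), I₁ p
        ≤ ∑ s ∈ S, (2 * (∑ p ∈ D.filter (fun p => a p = s), dist p (a p) ^ 2)
          + 2 * ((nhat s : ℝ) * I₁ s) + E * Δ ^ 2) := Finset.sum_le_sum key
      _ = 2 * (∑ s ∈ S, ∑ p ∈ D.filter (fun p => a p = s), dist p (a p) ^ 2)
          + 2 * (∑ s ∈ S, (nhat s : ℝ) * I₁ s) + (S.card : ℝ) * (E * Δ ^ 2) := by
            rw [Finset.sum_add_distrib, Finset.sum_add_distrib, Finset.sum_const,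
              nsmul_eq_mul, ← Finset.mul_sum, ← Finset.mul_sum]
      _ = 2 * fD S + 2 * fDstar + E * (S.card : ℝ) * Δ ^ 2 := by
            rw [hfib (fun p => dist p (a p) ^ 2), ← hfDS, ← hfDstar]
            ring
  rw [hfDS₁]
  exact total
end

section
/- Suppose for each l = 1,…,L the inequality |a_l| ≥ (1−α)(A_l − O_{l+1}) − err holds, where A_l = ∑_{j≥l}|a_j|, O_l = ∑_{j≥l}|o_j|, the thresholds satisfy r_{l+1} = 2r_l for l ≥ 1 with r_0 = 0, α ∈ (0, c₀) for a sufficiently small constant c₀, and err ≥ 0. Then ∑_{l=1}^L |a_l|·r_l ≤ (1 + O(α))·∑_{l=1}^L |o_l|·r_l + O(err·r_L). -/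
open Finset in
lemma my_swap (L : ℕ) (F G : ℕ → ℝ) :
    ∑ l ∈ Icc 1 L, (∑ j ∈ Icc l L, F j) * G l
      = ∑ j ∈ Icc 1 L, F j * (∑ l ∈ Icc 1 j, G l) := by
  simp_rw [Finset.sum_mul, Finset.mul_sum]
  exact Finset.sum_comm' (by intro x y; simp [Finset.mem_Icc]; omega)

open Finset in
lemma my_tele (r : ℕ → ℝ) (j : ℕ) : ∑ l ∈ Icc 1 j, (r l - r (l - 1)) = r j - r 0 := by
  rw [← Finset.Ico_add_one_right_eq_Icc, Finset.sum_Ico_eq_sum_range]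
  simp only [Nat.add_sub_cancel]
  have : ∀ i, r (1 + i) - r (1 + i - 1) = r (i + 1) - r i := by
    intro i; congr 1 <;> congr 1 <;> omega
  rw [Finset.sum_congr rfl fun i _ => this i, Finset.sum_range_sub]

/-- From the per-level greedy coverage guarantee
`|a_l| ≥ (1-α)(A_l - O_{l+1}) - err`, the covered-cost sum is bounded:
`∑ |a_l| r_l ≤ (1 + O(α)) ∑ |o_l| r_l + O(err · r_L)`. -/
theorem greedy_coverage_cost :
    ∃ c₀ C : ℝ, 0 < c₀ ∧ 0 < C ∧
      ∀ (L : ℕ) (r : ℕ → ℝ) (a o : ℕ → ℕ) (α err : ℝ),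
        1 ≤ L → r 0 = 0 → 0 ≤ r 1 →
        (∀ l, 1 ≤ l → l < L → r (l + 1) = 2 * r l) →
        0 < α → α < c₀ → 0 ≤ err →
        (∑ j ∈ Finset.Icc 1 L, a j = ∑ j ∈ Finset.Icc 1 L, o j) →
        (∀ l, 1 ≤ l → l ≤ L →
          (1 - α) * ((∑ j ∈ Finset.Icc l L, (a j : ℝ))
              - (∑ j ∈ Finset.Icc (l + 1) L, (o j : ℝ))) - err
            ≤ (a l : ℝ)) →
        ∑ l ∈ Finset.Icc 1 L, (a l : ℝ) * r l
          ≤ (1 + C * α) * (∑ l ∈ Finset.Icc 1 L, (o l : ℝ) * r l) + C * err * r L := by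
  refine ⟨1/4, 4, by norm_num, by norm_num, ?_⟩
  intro L r a o α err hL hr0 hr1 hrgeo hα hαc herr htot hgreedy
  set A : ℕ → ℝ := fun m => ∑ j ∈ Finset.Icc m L, (a j : ℝ) with hA
  set O : ℕ → ℝ := fun m => ∑ j ∈ Finset.Icc m L, (o j : ℝ) with hO
  set g : ℕ → ℝ := fun l => r l - r (l - 1) with hg
  -- nonnegativity of r on [0, L]
  have hrpos : ∀ k, k ≤ L → 0 ≤ r k := by
    intro k
    induction k with
    | zero => intro _; rw [hr0]
    | succ n ih =>
      intro hn
      rcases Nat.eq_zero_or_pos n with h0 | h1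
      · subst h0; exact hr1
      · rw [hrgeo n h1 (by omega)]
        have := ih (by omega)
        linarith
  have hAnn : ∀ m, 0 ≤ A m := fun m =>
    Finset.sum_nonneg fun j _ => Nat.cast_nonneg _
  have hOnn : ∀ m, 0 ≤ O m := fun m =>
    Finset.sum_nonneg fun j _ => Nat.cast_nonneg _
  -- g nonneg on [1, L]
  have hgnn : ∀ l, 1 ≤ l → l ≤ L → 0 ≤ g l := by
    intro l h1 h2
    rcases Nat.eq_or_lt_of_le h1 with h | h
    · simp only [hg, ← h, hr0]; simpa using hr1
    · have : g l = r (l - 1) := by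
        have hl : l - 1 + 1 = l := by omega
        have := hrgeo (l - 1) (by omega) (by omega)
        rw [hl] at this
        simp only [hg, this]; ring
      rw [this]; exact hrpos _ (by omega)
  -- Abel: covered-cost sums equal threshold-weighted suffix sums
  have habel : ∀ f : ℕ → ℕ, ∑ l ∈ Finset.Icc 1 L, (f l : ℝ) * r l
      = ∑ l ∈ Finset.Icc 1 L, (∑ j ∈ Finset.Icc l L, (f j : ℝ)) * g l := by
    intro f
    rw [my_swap]
    refine Finset.sum_congr rfl ?_
    intro j hj
    rw [my_tele, hr0, sub_zero]
  have habelA : ∑ l ∈ Finset.Icc 1 L, (a l : ℝ) * r l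
      = ∑ l ∈ Finset.Icc 1 L, A l * g l := habel a
  have habelO : ∑ l ∈ Finset.Icc 1 L, (o l : ℝ) * r l
      = ∑ l ∈ Finset.Icc 1 L, O l * g l := habel o
  set Sa := ∑ l ∈ Finset.Icc 1 L, A l * g l with hSa
  set So := ∑ l ∈ Finset.Icc 1 L, O l * g l with hSo
  have hSann : 0 ≤ Sa :=
    Finset.sum_nonneg fun l hl => by
      rw [Finset.mem_Icc] at hl
      exact mul_nonneg (hAnn l) (hgnn l hl.1 hl.2)
  have hSonn : 0 ≤ So :=
    Finset.sum_nonneg fun l hl => by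
      rw [Finset.mem_Icc] at hl
      exact mul_nonneg (hOnn l) (hgnn l hl.1 hl.2)
  -- split off A at the bottom
  have hAsplit : ∀ m, 1 ≤ m → m ≤ L → A m = (a m : ℝ) + A (m + 1) := by
    intro m _ h2
    simp only [hA]
    rw [show Finset.Icc (m + 1) L = Finset.Ioc m L from Finset.Icc_add_one_left_eq_Ioc m L]
    exact (Finset.add_sum_Ioc_eq_sum_Icc h2).symm
  -- recurrence
  have hrec : ∀ l, 2 ≤ l → l ≤ L → A l ≤ α * A (l - 1) + O l + err := by
    intro l h2 hL'
    have hm : l - 1 + 1 = l := by omega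
    have hgr := hgreedy (l - 1) (by omega) (by omega)
    rw [hm] at hgr
    have hsp := hAsplit (l - 1) (by omega) (by omega)
    rw [hm] at hsp
    have hOl : 0 ≤ O l := hOnn l
    nlinarith [hα.le]
  -- A 1 = O 1
  have hA1 : A 1 = O 1 := by
    simp only [hA, hO, ← Nat.cast_sum]
    exact_mod_cast congrArg (Nat.cast : ℕ → ℝ) htot
  -- main bound: Sa ≤ So + 2 α Sa + err * r L
  -- split Sa and So at l = 1
  have hsplit1 : ∀ F : ℕ → ℝ, ∑ l ∈ Finset.Icc 1 L, F l * g l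
      = F 1 * g 1 + ∑ l ∈ Finset.Icc 2 L, F l * g l := by
    intro F
    have h21 : Finset.Icc 2 L = Finset.Ioc 1 L := by
      ext x; simp only [Finset.mem_Icc, Finset.mem_Ioc]; omega
    rw [h21]
    exact (Finset.add_sum_Ioc_eq_sum_Icc hL).symm
  -- bound the middle sum
  have hmid : ∑ l ∈ Finset.Icc 2 L, A l * g l
      ≤ ∑ l ∈ Finset.Icc 2 L, (α * A (l - 1) + O l + err) * g l := by
    refine Finset.sum_le_sum ?_
    intro l hl
    rw [Finset.mem_Icc] at hl
    exact mul_le_mul_of_nonneg_right (hrec l hl.1 hl.2) (hgnn l (by omega) hl.2)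
  have hkey : Sa ≤ So + α * (∑ l ∈ Finset.Icc 2 L, A (l - 1) * g l)
      + err * (∑ l ∈ Finset.Icc 2 L, g l) := by
    rw [hSa, hSo, hsplit1 A, hsplit1 O, hA1]
    have : ∑ l ∈ Finset.Icc 2 L, (α * A (l - 1) + O l + err) * g l
        = ∑ l ∈ Finset.Icc 2 L, O l * g l
          + α * (∑ l ∈ Finset.Icc 2 L, A (l - 1) * g l)
          + err * (∑ l ∈ Finset.Icc 2 L, g l) := by
      rw [Finset.mul_sum, Finset.mul_sum, ← Finset.sum_add_distrib,
        ← Finset.sum_add_distrib]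
      refine Finset.sum_congr rfl fun l _ => by ring
    linarith [hmid]
  -- telescoping of g over [2, L]
  have hgsum : ∑ l ∈ Finset.Icc 2 L, g l ≤ r L := by
    have h1 : ∑ l ∈ Finset.Icc 1 L, g l = r L := by
      have := my_tele r L
      simp only [hg]
      rw [this, hr0, sub_zero]
    have h2 : ∑ l ∈ Finset.Icc 1 L, g l = g 1 + ∑ l ∈ Finset.Icc 2 L, g l := by
      have h21 : Finset.Icc 2 L = Finset.Ioc 1 L := by
        ext x; simp only [Finset.mem_Icc, Finset.mem_Ioc]; omega
      rw [h21]
      exact (Finset.add_sum_Ioc_eq_sum_Icc hL).symm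
    have hg1 : 0 ≤ g 1 := hgnn 1 le_rfl hL
    linarith
  -- shifted sum bound: ∑_{2..L} A(l-1) g l ≤ 2 Sa
  have hshift : ∑ l ∈ Finset.Icc 2 L, A (l - 1) * g l ≤ 2 * Sa := by
    have step : ∀ l, 2 ≤ l → l ≤ L → A (l - 1) * g l ≤ 2 * (A (l - 1) * g (l - 1)) := by
      intro l h2 hl
      have hgl : g l = r (l - 1) := by
        have hl1 : l - 1 + 1 = l := by omega
        have := hrgeo (l - 1) (by omega) (by omega)
        rw [hl1] at this
        simp only [hg, this]; ring
      have hgl1 : r (l - 1) ≤ 2 * g (l - 1) := by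
        rcases Nat.lt_or_ge l 3 with h3 | h3
        · have : l = 2 := by omega
          subst this
          simp only [hg, hr0]
          norm_num
          linarith [hr1]
        · have hl2 : l - 1 - 1 + 1 = l - 1 := by omega
          have hd := hrgeo (l - 1 - 1) (by omega) (by omega)
          rw [hl2] at hd
          simp only [hg, hd]
          have := hrpos (l - 1 - 1) (by omega)
          linarith
      calc A (l - 1) * g l = A (l - 1) * r (l - 1) := by rw [hgl]
        _ ≤ A (l - 1) * (2 * g (l - 1)) :=
            mul_le_mul_of_nonneg_left hgl1 (hAnn _)
        _ = 2 * (A (l - 1) * g (l - 1)) := by ring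
    have h1 : ∑ l ∈ Finset.Icc 2 L, A (l - 1) * g l
        ≤ ∑ l ∈ Finset.Icc 2 L, 2 * (A (l - 1) * g (l - 1)) := by
      refine Finset.sum_le_sum fun l hl => ?_
      rw [Finset.mem_Icc] at hl
      exact step l hl.1 hl.2
    have h2 : ∑ l ∈ Finset.Icc 2 L, A (l - 1) * g (l - 1)
        = ∑ l ∈ Finset.Icc 1 (L - 1), A l * g l := by
      rw [← Finset.Ico_add_one_right_eq_Icc, ← Finset.Ico_add_one_right_eq_Icc,
        Finset.sum_Ico_eq_sum_range, Finset.sum_Ico_eq_sum_range]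
      have hn : L + 1 - 2 = L - 1 + 1 - 1 := by omega
      rw [hn]
      refine Finset.sum_congr rfl fun i _ => ?_
      have : 2 + i - 1 = 1 + i := by omega
      rw [this]
    have h3 : ∑ l ∈ Finset.Icc 1 (L - 1), A l * g l ≤ Sa := by
      refine Finset.sum_le_sum_of_subset_of_nonneg ?_ ?_
      · exact Finset.Icc_subset_Icc le_rfl (by omega)
      · intro l hl _
        rw [Finset.mem_Icc] at hl
        exact mul_nonneg (hAnn l) (hgnn l hl.1 hl.2)
    calc ∑ l ∈ Finset.Icc 2 L, A (l - 1) * g l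
        ≤ ∑ l ∈ Finset.Icc 2 L, 2 * (A (l - 1) * g (l - 1)) := h1
      _ = 2 * ∑ l ∈ Finset.Icc 2 L, A (l - 1) * g (l - 1) := by
          rw [Finset.mul_sum]
      _ = 2 * ∑ l ∈ Finset.Icc 1 (L - 1), A l * g l := by rw [h2]
      _ ≤ 2 * Sa := by linarith [h3]
  -- put everything together
  have hErrnn : 0 ≤ err * r L := mul_nonneg herr (hrpos L le_rfl)
  have hfinal : Sa ≤ So + 2 * α * Sa + err * r L := by
    have h1 : α * (∑ l ∈ Finset.Icc 2 L, A (l - 1) * g l) ≤ α * (2 * Sa) :=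
      mul_le_mul_of_nonneg_left hshift hα.le
    have h2 : err * (∑ l ∈ Finset.Icc 2 L, g l) ≤ err * r L :=
      mul_le_mul_of_nonneg_left hgsum herr
    nlinarith [hkey]
  rw [habelA, habelO]
  have hαq : α < 1/4 := hαc
  have h2α : (0:ℝ) < 1 - 2*α := by linarith
  have key : (1 - 2*α) * Sa ≤ (1 - 2*α) * ((1 + 4*α) * So + 4 * err * r L) := by
    nlinarith [hfinal, mul_nonneg hα.le hSonn, hErrnn, hSonn,
      mul_nonneg (mul_nonneg (by linarith : (0:ℝ) ≤ 1 - 4*α) hα.le) hSonn,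
      mul_nonneg (by linarith : (0:ℝ) ≤ 3 - 8*α) (mul_nonneg herr (hrpos L le_rfl))]
  exact le_of_mul_le_mul_left key h2α
end
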